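/- Let D be an integral domain with quotient field K, A a finitely generated torsion-free D-algebra, B = A ⊗_D K, with A ∩ K = D under the canonical embeddings into B, and let S ⊆ A. Then S is a left ringset (i.e., Int^l_B(S,A) = {F ∈ B[x] : F_l(s) ∈ A for all s ∈ S} is closed under multiplication) if and only if, for every nonzero d ∈ D, the set N^l_{(A mod dA)}(S) = {f ∈ A[x] : f_l(s) ∈ dA for all s ∈ S} is a left ideal of A[x]. -/

import Mathlib

open Polynomial TensorProduct

/-- The left polynomial function `f_l : R → R`, `f_l(s) = ∑ k, s ^ k * c_k`,
where `f = ∑ k, c_k x^k`. -/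
def leftEval {R : Type*} [Semiring R] (f : R[X]) (s : R) : R :=
  f.sum fun k c => s ^ k * c

/-- The set `Int^l_B(S,A)` of left integer-valued polynomials on `S ⊆ A`, where
`B = A ⊗_D K` and `A` is embedded in `B` via `a ↦ a ⊗ 1`. -/
def IntLeft (D K A : Type*) [CommRing D] [Field K] [Algebra D K]
    [Ring A] [Algebra D A] (S : Set A) : Set (A ⊗[D] K)[X] :=
  {F : (A ⊗[D] K)[X] | ∀ s ∈ S,
    leftEval F (Algebra.TensorProduct.includeLeftRingHom (R := D) (B := K) s) ∈
      Set.range (Algebra.TensorProduct.includeLeftRingHom (R := D) (A := A) (B := K))}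

/-- A subset `N` of a (possibly noncommutative) ring is a left ideal:
an additive subgroup closed under multiplication from the left. -/
def IsLeftIdealSet {R : Type*} [Ring R] (N : Set R) : Prop :=
  0 ∈ N ∧ (∀ a ∈ N, ∀ b ∈ N, a + b ∈ N) ∧ (∀ a ∈ N, -a ∈ N) ∧
    ∀ g : R, ∀ a ∈ N, g * a ∈ N

section LeftEvalLemmas

variable {R : Type*} [Ring R]

theorem leftEval_eq_sum_range' {f : R[X]} {n : ℕ} (h : f.natDegree < n) (s : R) :
    leftEval f s = ∑ k ∈ Finset.range n, s ^ k * f.coeff k :=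
  f.sum_over_range' (fun _ => mul_zero _) n h

theorem leftEval_zero (s : R) : leftEval (0 : R[X]) s = 0 := by
  simp [leftEval]

theorem leftEval_add (f g : R[X]) (s : R) :
    leftEval (f + g) s = leftEval f s + leftEval g s :=
  Polynomial.sum_add_index f g _ (fun _ => mul_zero _) (fun _ _ _ => mul_add _ _ _)

theorem leftEval_neg (f : R[X]) (s : R) : leftEval (-f) s = -leftEval f s := by
  have h : leftEval f s + leftEval (-f) s = 0 := by
    rw [← leftEval_add]; simp [leftEval_zero]
  exact eq_neg_of_add_eq_zero_right h

theorem leftEval_monomial (n : ℕ) (c : R) (s : R) :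
    leftEval (monomial n c) s = s ^ n * c :=
  Polynomial.sum_monomial_index c _ (mul_zero _)

theorem leftEval_C (c : R) (s : R) : leftEval (C c) s = c := by
  rw [← Polynomial.monomial_zero_left, leftEval_monomial, pow_zero, one_mul]

theorem leftEval_smul {D : Type*} [CommRing D] [Algebra D R] (d : D) (f : R[X]) (s : R) :
    leftEval (d • f) s = d • leftEval f s := by
  have hds : (d • f).natDegree ≤ f.natDegree :=
    natDegree_le_iff_coeff_eq_zero.mpr fun N hN => by
      rw [coeff_smul, coeff_eq_zero_of_natDegree_lt hN, smul_zero]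
  rw [leftEval_eq_sum_range' (hds.trans_lt (lt_add_one _)) s,
    leftEval_eq_sum_range' (lt_add_one f.natDegree) s, Finset.smul_sum]
  refine Finset.sum_congr rfl fun k _ => ?_
  rw [coeff_smul, mul_smul_comm]

theorem leftEval_map {S : Type*} [Ring S] (φ : R →+* S) (f : R[X]) (s : R) :
    leftEval (f.map φ) (φ s) = φ (leftEval f s) := by
  rw [leftEval_eq_sum_range' ((natDegree_map_le (f := φ) (p := f)).trans_lt (lt_add_one _)) (φ s),
    leftEval_eq_sum_range' (lt_add_one f.natDegree) s, map_sum]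
  refine Finset.sum_congr rfl fun k _ => ?_
  rw [coeff_map, map_mul, map_pow]

theorem leftEval_X_mul (g : R[X]) (s : R) :
    leftEval (X * g) s = s * leftEval g s := by
  have hdeg : (X * g).natDegree < g.natDegree + 2 :=
    natDegree_mul_le.trans_lt
      (lt_of_le_of_lt (Nat.add_le_add_right natDegree_X_le _) (by omega))
  rw [leftEval_eq_sum_range' hdeg s, leftEval_eq_sum_range' (lt_add_one g.natDegree) s,
    Finset.sum_range_succ', Finset.mul_sum]
  simp only [coeff_X_mul, pow_zero, one_mul, mul_coeff_zero, coeff_X_zero, zero_mul, mul_zero,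
    add_zero]
  refine Finset.sum_congr rfl fun k _ => ?_
  rw [pow_succ', mul_assoc]

theorem leftEval_X_pow_mul (n : ℕ) (g : R[X]) (s : R) :
    leftEval (X ^ n * g) s = s ^ n * leftEval g s := by
  induction n with
  | zero => simp
  | succ n ih =>
    rw [pow_succ', mul_assoc, leftEval_X_mul, ih, ← mul_assoc, ← pow_succ']

theorem leftEval_C_mul_eq (a : R) (g : R[X]) (s : R) :
    leftEval (C a * g) s = ∑ k ∈ Finset.range (g.natDegree + 1), s ^ k * (a * g.coeff k) := by
  rw [leftEval_eq_sum_range' ((natDegree_C_mul_le a g).trans_lt (lt_add_one _)) s]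
  refine Finset.sum_congr rfl fun k _ => ?_
  rw [coeff_C_mul]

/-- The key identity: `(f·g)_l(s) = (C(f_l(s))·g)_l(s)`. -/
theorem leftEval_mul (f g : R[X]) (s : R) :
    leftEval (f * g) s = leftEval (C (leftEval f s) * g) s := by
  induction f using Polynomial.induction_on' with
  | add p q hp hq =>
    rw [add_mul, leftEval_add, hp, hq, leftEval_add, map_add, add_mul, leftEval_add]
  | monomial n c =>
    have h1 : (monomial n c) * g = X ^ n * (C c * g) := by
      rw [← C_mul_X_pow_eq_monomial, X_pow_mul, mul_assoc, X_pow_mul, ← mul_assoc]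
    rw [h1, leftEval_X_pow_mul, leftEval_monomial, leftEval_C_mul_eq, leftEval_C_mul_eq,
      Finset.mul_sum]
    refine Finset.sum_congr rfl fun k _ => ?_
    calc s ^ n * (s ^ k * (c * g.coeff k))
        = (s ^ n * s ^ k) * (c * g.coeff k) := by rw [mul_assoc]
      _ = (s ^ k * s ^ n) * (c * g.coeff k) := by rw [pow_mul_comm]
      _ = s ^ k * (s ^ n * c * g.coeff k) := by rw [mul_assoc, mul_assoc]

end LeftEvalLemmas

/-- Theorem (link, left version): `S ⊆ A` is a left ringset iff, for every nonzero `d ∈ D`,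
`N^l_{(A mod dA)}(S) = {f ∈ A[x] : f_l(s) ∈ dA for all s ∈ S}` is a left ideal of `A[x]`. -/
theorem leftRingset_iff_leftNullIdealSet_mod
    (D : Type*) [CommRing D] [IsDomain D]
    (K : Type*) [Field K] [Algebra D K] [IsFractionRing D K]
    (A : Type*) [Ring A] [Algebra D A] [Module.Finite D A] [NoZeroSMulDivisors D A]
    (hAK : ∀ b : A ⊗[D] K,
      b ∈ Set.range (Algebra.TensorProduct.includeLeftRingHom (R := D) (A := A) (B := K)) →
      b ∈ Set.range (Algebra.TensorProduct.includeRight (R := D) (A := A) (B := K)) →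
      b ∈ Set.range (algebraMap D (A ⊗[D] K)))
    (S : Set A) :
    (∀ F ∈ IntLeft D K A S, ∀ G ∈ IntLeft D K A S, F * G ∈ IntLeft D K A S) ↔
    (∀ d : D, d ≠ 0 →
      IsLeftIdealSet {f : A[X] | ∀ s ∈ S, leftEval f s ∈ Set.range (fun a : A => d • a)}) := by
  set B := A ⊗[D] K with hB
  set ι : A →+* B := Algebra.TensorProduct.includeLeftRingHom (R := D) (A := A) (B := K)
    with hι
  have hιa : ∀ a : A, ι a = a ⊗ₜ[D] (1 : K) := fun a => rfl
  -- the canonical map as a `D`-linear map, which is a localized module map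
  set f₀ : A →ₗ[D] B :=
    (TensorProduct.comm D K A).toLinearMap ∘ₗ TensorProduct.mk D K A 1 with hf₀
  have hf₀a : ∀ a : A, f₀ a = a ⊗ₜ[D] (1 : K) := fun a => rfl
  haveI hloc0 : IsLocalizedModule (nonZeroDivisors D) (TensorProduct.mk D K A 1) := by
    rw [isLocalizedModule_iff_isBaseChange (nonZeroDivisors D) K]
    exact TensorProduct.isBaseChange D A K
  haveI hloc : IsLocalizedModule (nonZeroDivisors D) f₀ :=
    IsLocalizedModule.of_linearEquiv _ _ _
  -- injectivity of `ι`
  have hinj : Function.Injective ι := by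
    intro a b hab
    have h0 : f₀ (a - b) = 0 := by
      rw [map_sub]
      have : f₀ a = f₀ b := by rw [hf₀a, hf₀a, ← hιa, ← hιa, hab]
      rw [this, sub_self]
    obtain ⟨s, hs⟩ := (IsLocalizedModule.eq_zero_iff (nonZeroDivisors D) f₀).mp h0
    have hsne : (s : D) ≠ 0 := nonZeroDivisors.coe_ne_zero s
    have := (smul_eq_zero (r := (s : D)) (m := a - b)).mp hs
    rcases this with h | h
    · exact absurd h hsne
    · exact sub_eq_zero.mp h
  -- `ι` is `D`-linear
  have hιsmul : ∀ (d : D) (a : A), ι (d • a) = d • ι a := by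
    intro d a
    rw [hιa, hιa, TensorProduct.smul_tmul']
  -- smul by a nonzero d on B is multiplication by the central unit 1 ⊗ (algebraMap D K d)
  have hsmul_eq : ∀ (d : D) (x : B), d • x = ((1 : A) ⊗ₜ[D] algebraMap D K d) * x := by
    intro d x
    rw [Algebra.smul_def, Algebra.TensorProduct.algebraMap_apply']
  have hk_ne : ∀ (d : D), d ≠ 0 → algebraMap D K d ≠ 0 := by
    intro d hd h
    exact hd (IsFractionRing.injective D K (by simpa using h))
  have hsmul_inj : ∀ (d : D), d ≠ 0 → ∀ x y : B, d • x = d • y → x = y := by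
    intro d hd x y hxy
    rw [hsmul_eq, hsmul_eq] at hxy
    have h1 : ((1 : A) ⊗ₜ[D] (algebraMap D K d)⁻¹) * ((1 : A) ⊗ₜ[D] algebraMap D K d)
        = (1 : B) := by
      rw [Algebra.TensorProduct.tmul_mul_tmul, one_mul, inv_mul_cancel₀ (hk_ne d hd)]
      rfl
    calc x = (((1 : A) ⊗ₜ[D] (algebraMap D K d)⁻¹) * ((1 : A) ⊗ₜ[D] algebraMap D K d)) * x := by
            rw [h1, one_mul]
      _ = ((1 : A) ⊗ₜ[D] (algebraMap D K d)⁻¹) * (((1 : A) ⊗ₜ[D] algebraMap D K d) * x) := by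
            rw [mul_assoc]
      _ = ((1 : A) ⊗ₜ[D] (algebraMap D K d)⁻¹) * (((1 : A) ⊗ₜ[D] algebraMap D K d) * y) := by
            rw [hxy]
      _ = (((1 : A) ⊗ₜ[D] (algebraMap D K d)⁻¹) * ((1 : A) ⊗ₜ[D] algebraMap D K d)) * y := by
            rw [mul_assoc]
      _ = y := by rw [h1, one_mul]
  -- common denominators for elements of B
  have hdenom : ∀ b : B, ∃ d : D, d ≠ 0 ∧ ∃ a : A, d • b = ι a := by
    intro b
    obtain ⟨⟨a, s⟩, h⟩ := IsLocalizedModule.mk'_surjective (nonZeroDivisors D) f₀ b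
    simp only [Function.uncurry_apply_pair] at h
    refine ⟨(s : D), nonZeroDivisors.coe_ne_zero s, a, ?_⟩
    have := IsLocalizedModule.mk'_cancel' f₀ a s
    rw [h] at this
    have h2 : (s : D) • b = f₀ a := this
    exact h2.trans ((hf₀a a).trans (hιa a).symm)
  -- `Polynomial.map ι` commutes with `D`-scalars
  have hmap_smul : ∀ (d : D) (f : A[X]), (d • f).map ι = d • (f.map ι) := by
    intro d f
    ext n
    rw [coeff_map, coeff_smul, coeff_smul, coeff_map, hιsmul]
  -- common denominators for polynomials over B
  have hpolydenom : ∀ F : B[X], ∃ d : D, d ≠ 0 ∧ ∃ f : A[X], d • F = f.map ι := by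
    intro F
    induction F using Polynomial.induction_on' with
    | add p q hp hq =>
      obtain ⟨c, hc, f, hf⟩ := hp
      obtain ⟨e, he, g, hg⟩ := hq
      refine ⟨c * e, mul_ne_zero hc he, e • f + c • g, ?_⟩
      rw [Polynomial.map_add, hmap_smul, hmap_smul, ← hf, ← hg, smul_add, smul_smul,
        smul_smul, mul_comm e c]
    | monomial n b =>
      obtain ⟨d, hd, a, ha⟩ := hdenom b
      refine ⟨d, hd, monomial n a, ?_⟩
      rw [Polynomial.map_monomial, ← ha, Polynomial.smul_monomial]
  -- membership in N_d transfers through ι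
  constructor
  · -- ringset → null ideals
    intro hmul d hd
    refine ⟨?_, ?_, ?_, ?_⟩
    · intro s _
      exact ⟨0, by simp [leftEval_zero]⟩
    · intro f hf g hg s hs
      obtain ⟨x, hx⟩ := hf s hs
      obtain ⟨y, hy⟩ := hg s hs
      exact ⟨x + y, by rw [leftEval_add, ← hx, ← hy]; simp [smul_add]⟩
    · intro f hf s hs
      obtain ⟨x, hx⟩ := hf s hs
      exact ⟨-x, by rw [leftEval_neg, ← hx]; simp⟩
    · intro g f hf s hs
      have huv : ((1 : A) ⊗ₜ[D] (algebraMap D K d)⁻¹ : B) * ((1 : A) ⊗ₜ[D] algebraMap D K d)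
          = 1 := by
        rw [Algebra.TensorProduct.tmul_mul_tmul, one_mul, inv_mul_cancel₀ (hk_ne d hd)]
        rfl
      have hvu : ((1 : A) ⊗ₜ[D] algebraMap D K d : B) * ((1 : A) ⊗ₜ[D] (algebraMap D K d)⁻¹)
          = 1 := by
        rw [Algebra.TensorProduct.tmul_mul_tmul, one_mul, mul_inv_cancel₀ (hk_ne d hd)]
        rfl
      have hdu : d • ((1 : A) ⊗ₜ[D] (algebraMap D K d)⁻¹ : B) = 1 := by
        rw [hsmul_eq]; exact hvu
      have heval : ∀ (h : A[X]) (t : A),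
          leftEval ((h.map ι) * C ((1 : A) ⊗ₜ[D] (algebraMap D K d)⁻¹)) (ι t)
            = ι (leftEval h t) * ((1 : A) ⊗ₜ[D] (algebraMap D K d)⁻¹) := by
        intro h t
        rw [leftEval_mul, leftEval_map, ← map_mul, leftEval_C]
      have hFInt : (f.map ι) * C ((1 : A) ⊗ₜ[D] (algebraMap D K d)⁻¹) ∈ IntLeft D K A S := by
        intro t ht
        obtain ⟨a, ha⟩ := hf t ht
        have ha' : d • a = leftEval f t := ha
        refine ⟨a, ?_⟩
        rw [heval f t, ← ha', hιsmul, smul_mul_assoc, ← mul_smul_comm, hdu, mul_one]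
      have hgInt : (g.map ι) ∈ IntLeft D K A S := by
        intro t ht
        exact ⟨leftEval g t, (leftEval_map ι g t).symm⟩
      have hprod := hmul _ hgInt _ hFInt
      obtain ⟨b, hb⟩ := hprod s hs
      have hre : (g.map ι) * ((f.map ι) * C ((1 : A) ⊗ₜ[D] (algebraMap D K d)⁻¹))
          = ((g * f).map ι) * C ((1 : A) ⊗ₜ[D] (algebraMap D K d)⁻¹) := by
        rw [Polynomial.map_mul, mul_assoc]
      rw [hre, heval (g * f) s] at hb
      have hbv : ι b * ((1 : A) ⊗ₜ[D] algebraMap D K d) = ι (leftEval (g * f) s) := by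
        rw [hb, mul_assoc, huv, mul_one]
      have hbv2 : ι b * ((1 : A) ⊗ₜ[D] algebraMap D K d) = ι (d • b) := by
        rw [hιa b, hιa (d • b), Algebra.TensorProduct.tmul_mul_tmul, mul_one, one_mul,
          Algebra.algebraMap_eq_smul_one, TensorProduct.tmul_smul, TensorProduct.smul_tmul']
      exact ⟨b, hinj (hbv2.symm.trans hbv)⟩
  · -- null ideals → ringset
    intro hN F hF G hG s hs
    obtain ⟨c, hc, f, hcf⟩ := hpolydenom F
    obtain ⟨e, he, g, heg⟩ := hpolydenom G
    -- f_l(t) ∈ cA for all t ∈ S, and similarly for g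
    have hfN : ∀ t ∈ S, ∀ a : A, ι a = leftEval F (ι t) → leftEval f t = c • a := by
      intro t ht a ha
      apply hinj
      rw [← leftEval_map ι f t, ← hcf, leftEval_smul, ← ha, ← hιsmul]
    have hgN : g ∈ {p : A[X] | ∀ t ∈ S, leftEval p t ∈ Set.range (fun a : A => e • a)} := by
      intro t ht
      obtain ⟨a, ha⟩ := hG t ht
      refine ⟨a, ?_⟩
      show e • a = leftEval g t
      symm
      apply hinj
      rw [← leftEval_map ι g t, ← heg, leftEval_smul, ← ha, ← hιsmul]
    obtain ⟨a, ha⟩ := hF s hs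
    have hfa : leftEval f s = c • a := hfN s hs a ha
    -- use the left ideal property of N_e
    have hCag : (C a * g) ∈ {p : A[X] | ∀ t ∈ S, leftEval p t ∈ Set.range (fun x : A => e • x)} :=
      (hN e he).2.2.2 (C a) g hgN
    obtain ⟨b, hb⟩ := hCag s hs
    have hb' : e • b = leftEval (C a * g) s := hb
    -- compute (f*g)_l(s)
    have hfg : leftEval (f * g) s = (c * e) • b := by
      rw [leftEval_mul, hfa, ← Polynomial.smul_C, smul_mul_assoc, leftEval_smul, ← hb',
        smul_smul]
    -- conclude
    refine ⟨b, ?_⟩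
    apply hsmul_inj (c * e) (mul_ne_zero hc he)
    have hFG : (c * e) • (F * G) = ((f * g).map ι) := by
      rw [Polynomial.map_mul, ← hcf, ← heg, smul_mul_assoc, mul_smul_comm, smul_smul]
    calc (c * e) • ι b = ι ((c * e) • b) := (hιsmul _ _).symm
      _ = ι (leftEval (f * g) s) := by rw [← hfg]
      _ = leftEval ((f * g).map ι) (ι s) := (leftEval_map ι (f * g) s).symm
      _ = leftEval ((c * e) • (F * G)) (ι s) := by rw [hFG]
      _ = (c * e) • leftEval (F * G) (ι s) := leftEval_smul _ _ _
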